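/- For every odd integer p ≥ 3 and every positive integer k, if D is a k-obstruction, then D cannot be made k-arc-strong by applying any finite sequence of inversions of vertex sets of size exactly p. -/

import Mathlib

/-- The number of arcs of the digraph `D` leaving the vertex set `S`. -/
noncomputable def dicut {V : Type*} [Fintype V] (D : V → V → Prop) (S : Finset V) : ℕ :=
  Nat.card {p : V × V // p.1 ∈ S ∧ p.2 ∉ S ∧ D p.1 p.2}

/-- A digraph is `k`-arc-strong iff every dicut has size at least `k`. -/
def ArcStrong {V : Type*} [Fintype V] (D : V → V → Prop) (k : ℕ) : Prop :=
  ∀ S : Finset V, S.Nonempty → S ≠ Finset.univ → k ≤ dicut D S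

/-- The number of edges of the underlying graph of `D` leaving `S`. -/
noncomputable def undirCut {V : Type*} [Fintype V] (D : V → V → Prop) (S : Finset V) : ℕ :=
  dicut D S + dicut (fun u v => D v u) S

/-- Inverting the vertex set `X` in `D`: all arcs with both endvertices in `X` are reversed. -/
def invert {V : Type*} [DecidableEq V] (D : V → V → Prop) (X : Finset V) : V → V → Prop :=
  fun u v => if u ∈ X ∧ v ∈ X then D v u else D u v

/-- Applying a sequence of inversions. -/
def invertSeq {V : Type*} [DecidableEq V] (D : V → V → Prop) (l : List (Finset V)) :
    V → V → Prop :=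
  l.foldl invert D

/-- `D` is a `k`-obstruction. -/
def IsKObstruction {V : Type*} [Fintype V] [DecidableEq V] (D : V → V → Prop) (k : ℕ) : Prop :=
  ∃ (r : ℕ) (Xs : Fin r → Finset V) (Y : Finset V),
    1 ≤ r ∧ (∀ i, (Xs i).Nonempty) ∧ Y.Nonempty ∧
    (∀ i j, i ≠ j → Disjoint (Xs i) (Xs j)) ∧ (∀ i, Disjoint (Xs i) Y) ∧
    (Finset.univ.biUnion Xs) ∪ Y = Finset.univ ∧
    (∀ i, undirCut D (Xs i) = 2 * k) ∧
    (∀ x ∈ Finset.univ.biUnion Xs, ∀ y ∈ Y, (D x y ∧ ¬ D y x) ∨ (D y x ∧ ¬ D x y)) ∧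
    (∃ m : ℤ, Odd m ∧
      2 * m = 2 * (dicut D (Finset.univ.biUnion Xs) : ℤ)
        - ((Finset.univ.biUnion Xs).card : ℤ) * (Y.card : ℤ))

section Aux

open scoped Classical

variable {V : Type*} [Fintype V] [DecidableEq V]

lemma dicut_eq (D : V → V → Prop) (S : Finset V) :
    dicut D S = ∑ x ∈ S, ∑ y ∈ Sᶜ, if D x y then 1 else 0 := by
  rw [dicut, Nat.card_eq_fintype_card, Fintype.card_subtype]
  rw [show Finset.univ.filter (fun p : V × V => p.1 ∈ S ∧ p.2 ∉ S ∧ D p.1 p.2)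
      = (S ×ˢ Sᶜ).filter (fun p => D p.1 p.2) from ?_]
  · rw [Finset.card_filter, Finset.sum_product]
  · ext p; simp [Finset.mem_product]; tauto

lemma dicut_eqZ (D : V → V → Prop) (S : Finset V) :
    (dicut D S : ℤ) = ∑ x ∈ S, ∑ y ∈ Sᶜ, if D x y then 1 else 0 := by
  rw [dicut_eq]; push_cast; rfl

lemma dicut_compl (D : V → V → Prop) (S : Finset V) :
    dicut D Sᶜ = dicut (fun u v => D v u) S := by
  rw [dicut, dicut]
  apply Nat.card_congr
  exact Equiv.subtypeEquiv (Equiv.prodComm V V) (by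
    intro p
    simp only [Equiv.prodComm_apply, Prod.fst_swap, Prod.snd_swap, Finset.mem_compl]
    tauto)

lemma sum_mem_ite {M : Type*} [AddCommMonoid M] (S : Finset V) (f : V → M) :
    ∑ x : V, (if x ∈ S then f x else 0) = ∑ x ∈ S, f x := by
  rw [Finset.sum_ite_mem, Finset.univ_inter]

lemma dicut_full (D : V → V → Prop) (S : Finset V) :
    (dicut D S : ℤ) = ∑ x : V, ∑ y : V, if x ∈ S ∧ y ∉ S ∧ D x y then 1 else 0 := by
  rw [dicut_eqZ, ← sum_mem_ite S]
  congr 1; ext x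
  by_cases hx : x ∈ S
  · simp only [hx, if_true, true_and]
    rw [← sum_mem_ite Sᶜ]
    congr 1; ext y
    by_cases hy : y ∈ S <;> simp [hy]
  · simp [hx]

/-- The signed out-minus-in count. -/
noncomputable def gZ (D : V → V → Prop) (S : Finset V) : ℤ :=
  (dicut D S : ℤ) - (dicut (fun u v => D v u) S : ℤ)

lemma gZ_full (D : V → V → Prop) (S : Finset V) :
    gZ D S = ∑ x : V, ∑ y : V,
      (if D x y then ((if x ∈ S then (1:ℤ) else 0) - (if y ∈ S then 1 else 0)) else 0) := by
  rw [gZ, dicut_full, dicut_full]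
  rw [show (∑ x : V, ∑ y : V, if x ∈ S ∧ y ∉ S ∧ D y x then (1:ℤ) else 0)
      = ∑ x : V, ∑ y : V, if y ∈ S ∧ x ∉ S ∧ D x y then (1:ℤ) else 0 from Finset.sum_comm]
  rw [← Finset.sum_sub_distrib]
  congr 1; ext x
  rw [← Finset.sum_sub_distrib]
  congr 1; ext y
  by_cases hd : D x y
  · by_cases hx : x ∈ S <;> by_cases hy : y ∈ S <;> simp [hd, hx, hy]
  · simp [hd]

lemma gZ_biUnion {r : ℕ} (D : V → V → Prop) (Xs : Fin r → Finset V)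
    (hdisj : ∀ i j, i ≠ j → Disjoint (Xs i) (Xs j)) :
    gZ D (Finset.univ.biUnion Xs) = ∑ i, gZ D (Xs i) := by
  have hchi : ∀ u : V, (if u ∈ Finset.univ.biUnion Xs then (1:ℤ) else 0)
      = ∑ i, if u ∈ Xs i then 1 else 0 := by
    intro u
    by_cases h : u ∈ Finset.univ.biUnion Xs
    · obtain ⟨i, -, hi⟩ := Finset.mem_biUnion.mp h
      rw [if_pos h, Finset.sum_eq_single i]
      · simp [hi]
      · intro j _ hj
        have : u ∉ Xs j := fun hu =>
          Finset.disjoint_left.mp (hdisj j i hj) hu hi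
        simp [this]
      · simp
    · rw [if_neg h]
      have : ∀ i, u ∉ Xs i := fun i hi => h (Finset.mem_biUnion.mpr ⟨i, Finset.mem_univ i, hi⟩)
      simp [this]
  rw [gZ_full]
  rw [Finset.sum_congr rfl (fun i _ => gZ_full D (Xs i))]
  have step : ∀ x y : V, (if D x y then ((if x ∈ Finset.univ.biUnion Xs then (1:ℤ) else 0)
        - (if y ∈ Finset.univ.biUnion Xs then 1 else 0)) else 0)
      = ∑ i, (if D x y then ((if x ∈ Xs i then (1:ℤ) else 0) - (if y ∈ Xs i then 1 else 0))
        else 0) := by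
    intro x y
    by_cases hd : D x y
    · simp only [hd, if_true, hchi, ← Finset.sum_sub_distrib]
    · simp [hd]
  rw [Finset.sum_congr rfl fun x _ => Finset.sum_congr rfl fun y _ => step x y]
  rw [Finset.sum_congr rfl fun x _ => Finset.sum_comm]
  exact Finset.sum_comm

lemma card_identity (D : V → V → Prop) (X : Finset V)
    (hone : ∀ x ∈ X, ∀ y ∈ Xᶜ, (D x y ∧ ¬ D y x) ∨ (D y x ∧ ¬ D x y)) :
    (dicut D X : ℤ) + (dicut (fun u v => D v u) X : ℤ) = (X.card : ℤ) * (Xᶜ.card : ℤ) := by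
  rw [dicut_eqZ, dicut_eqZ, ← Finset.sum_add_distrib]
  have : ∀ x ∈ X, (∑ y ∈ Xᶜ, if D x y then (1:ℤ) else 0) + (∑ y ∈ Xᶜ, if D y x then (1:ℤ) else 0)
      = (Xᶜ.card : ℤ) := by
    intro x hx
    rw [← Finset.sum_add_distrib]
    rw [Finset.sum_congr rfl (fun y hy => ?_), Finset.sum_const, nsmul_eq_mul, mul_one]
    rcases hone x hx y hy with ⟨h1, h2⟩ | ⟨h1, h2⟩ <;> simp [h1, h2]
  rw [Finset.sum_congr rfl this, Finset.sum_const, nsmul_eq_mul]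

lemma Y_eq_compl {r : ℕ} (Xs : Fin r → Finset V) (Y : Finset V)
    (hdisjY : ∀ i, Disjoint (Xs i) Y)
    (hcover : (Finset.univ.biUnion Xs) ∪ Y = Finset.univ) :
    Y = (Finset.univ.biUnion Xs)ᶜ := by
  ext v
  simp only [Finset.mem_compl]
  constructor
  · intro hv hvX
    obtain ⟨i, -, hi⟩ := Finset.mem_biUnion.mp hvX
    exact Finset.disjoint_left.mp (hdisjY i) hi hv
  · intro hv
    rcases Finset.mem_union.mp (by rw [hcover]; exact Finset.mem_univ v) with h | h
    · exact absurd h hv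
    · exact h

lemma obstruction_not_arcstrong (D : V → V → Prop) (k : ℕ)
    (hobs : IsKObstruction D k) : ¬ ArcStrong D k := by
  obtain ⟨r, Xs, Y, hr, hXne, hYne, hdisj, hdisjY, hcover, hund, hone, m, hmodd, hm⟩ := hobs
  intro hAS
  set X := Finset.univ.biUnion Xs with hX
  have hYc : Y = Xᶜ := Y_eq_compl Xs Y hdisjY hcover
  have hzero : ∀ i, gZ D (Xs i) = 0 := by
    intro i
    obtain ⟨y, hy⟩ := hYne
    have hyc : y ∉ Xs i := fun h => Finset.disjoint_left.mp (hdisjY i) h hy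
    have h1 : k ≤ dicut D (Xs i) :=
      hAS _ (hXne i) (fun h => hyc (h ▸ Finset.mem_univ y))
    have h2 : k ≤ dicut (fun u v => D v u) (Xs i) := by
      rw [← dicut_compl]
      apply hAS
      · exact ⟨y, Finset.mem_compl.mpr hyc⟩
      · intro h
        obtain ⟨x, hx⟩ := hXne i
        exact Finset.mem_compl.mp (h ▸ Finset.mem_univ x) hx
    have h3 := hund i
    rw [undirCut] at h3
    have : dicut D (Xs i) = k ∧ dicut (fun u v => D v u) (Xs i) = k := by omega
    rw [gZ, this.1, this.2]; ring
  have hg : gZ D X = 0 := by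
    rw [hX, gZ_biUnion D Xs hdisj]
    exact Finset.sum_eq_zero fun i _ => hzero i
  have hci := card_identity D X (by rw [← hYc]; exact hone)
  rw [hYc] at hm
  rw [gZ] at hg
  obtain ⟨n, hn⟩ := hmodd
  omega

lemma gZ_invert (D : V → V → Prop) (W X : Finset V) (hW : Odd W.card)
    (honeX : ∀ x ∈ X, ∀ y ∈ Xᶜ, (D x y ∧ ¬ D y x) ∨ (D y x ∧ ¬ D x y)) :
    ∃ t : ℤ, Even t ∧
      ((dicut (invert D W) X : ℤ) - (dicut (fun u v => invert D W v u) X : ℤ))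
        = ((dicut D X : ℤ) - (dicut (fun u v => D v u) X : ℤ)) - 2 * t := by
  refine ⟨∑ x ∈ X, ∑ y ∈ Xᶜ, if x ∈ W ∧ y ∈ W then
    ((if D x y then (1:ℤ) else 0) - (if D y x then 1 else 0)) else 0, ?_, ?_⟩
  · -- Even t
    set c : ℤ := ∑ x ∈ X, ∑ y ∈ Xᶜ, if x ∈ W ∧ y ∈ W then (1:ℤ) else 0 with hc
    have h1 : (2:ℤ) ∣ ((∑ x ∈ X, ∑ y ∈ Xᶜ, if x ∈ W ∧ y ∈ W then
        ((if D x y then (1:ℤ) else 0) - (if D y x then 1 else 0)) else 0) - c) := by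
      rw [hc, ← Finset.sum_sub_distrib]
      refine Finset.dvd_sum fun x hx => ?_
      rw [← Finset.sum_sub_distrib]
      refine Finset.dvd_sum fun y hy => ?_
      rcases honeX x hx y hy with ⟨ha, hb⟩ | ⟨ha, hb⟩ <;>
        by_cases hw : x ∈ W ∧ y ∈ W <;> simp [ha, hb, hw]
    have h2 : c = ((X ∩ W).card : ℤ) * ((Xᶜ ∩ W).card : ℤ) := by
      rw [hc]
      have : ∀ x : V, ∀ y : V, (if x ∈ W ∧ y ∈ W then (1:ℤ) else 0)
          = (if x ∈ W then (1:ℤ) else 0) * (if y ∈ W then 1 else 0) := by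
        intro x y
        by_cases hx : x ∈ W <;> by_cases hy : y ∈ W <;> simp [hx, hy]
      rw [Finset.sum_congr rfl fun x _ => Finset.sum_congr rfl fun y _ => this x y]
      rw [Finset.sum_congr rfl fun x _ => (Finset.mul_sum _ _ _).symm, ← Finset.sum_mul]
      congr 1
      · rw [Finset.sum_ite_mem, Finset.sum_const, nsmul_eq_mul, mul_one]
      · rw [Finset.sum_ite_mem, Finset.sum_const, nsmul_eq_mul, mul_one]
    have hsum : (X ∩ W).card + (Xᶜ ∩ W).card = W.card := by
      rw [Finset.inter_comm X W, Finset.inter_comm Xᶜ W,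
        show W ∩ Xᶜ = W \ X from by ext v; simp]
      exact Finset.card_inter_add_card_sdiff W X
    have h3 : Even ((X ∩ W).card * (Xᶜ ∩ W).card) := by
      rcases Nat.even_or_odd (X ∩ W).card with h | h
      · exact h.mul_right _
      · rcases Nat.even_or_odd (Xᶜ ∩ W).card with h' | h'
        · exact h'.mul_left _
        · exact absurd (hsum ▸ h.add_odd h') (by rw [Nat.not_odd_iff_even.symm]; simp [hW])
    have h4 : Even c := by rw [h2]; exact_mod_cast h3.natCast (α := ℤ)
    have h5 := dvd_add h1 h4.two_dvd
    rw [sub_add_cancel] at h5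
    exact (even_iff_two_dvd).mpr h5
  · -- the sum identity
    have key : ∀ x y : V, ((if invert D W x y then (1:ℤ) else 0)
          - (if invert D W y x then 1 else 0))
        = ((if D x y then (1:ℤ) else 0) - (if D y x then 1 else 0))
          - 2 * (if x ∈ W ∧ y ∈ W then
            ((if D x y then (1:ℤ) else 0) - (if D y x then 1 else 0)) else 0) := by
      intro x y
      by_cases hw : x ∈ W ∧ y ∈ W
      · have e1 : invert D W x y ↔ D y x := by simp [invert, hw.1, hw.2]
        have e2 : invert D W y x ↔ D x y := by simp [invert, hw.1, hw.2]
        simp only [e1, e2, if_pos hw]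
        ring
      · have hw' : ¬ (y ∈ W ∧ x ∈ W) := fun h => hw ⟨h.2, h.1⟩
        have e1 : invert D W x y ↔ D x y := by simp [invert, hw]
        have e2 : invert D W y x ↔ D y x := by simp [invert, hw']
        simp only [e1, e2, if_neg hw]
        ring
    rw [dicut_eqZ, dicut_eqZ, dicut_eqZ, dicut_eqZ, ← Finset.sum_sub_distrib,
      ← Finset.sum_sub_distrib, Finset.mul_sum, ← Finset.sum_sub_distrib]
    refine Finset.sum_congr rfl fun x _ => ?_
    rw [← Finset.sum_sub_distrib, ← Finset.sum_sub_distrib, Finset.mul_sum,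
      ← Finset.sum_sub_distrib]
    exact Finset.sum_congr rfl fun y _ => key x y

lemma undirCut_invert (D : V → V → Prop) (W S : Finset V) :
    undirCut (invert D W) S = undirCut D S := by
  have h : (undirCut (invert D W) S : ℤ) = (undirCut D S : ℤ) := by
    rw [undirCut, undirCut]
    push_cast
    rw [dicut_eqZ, dicut_eqZ, dicut_eqZ, dicut_eqZ, ← Finset.sum_add_distrib,
      ← Finset.sum_add_distrib]
    refine Finset.sum_congr rfl fun x _ => ?_
    rw [← Finset.sum_add_distrib, ← Finset.sum_add_distrib]
    refine Finset.sum_congr rfl fun y _ => ?_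
    by_cases hw : x ∈ W ∧ y ∈ W
    · have e1 : invert D W x y ↔ D y x := by simp [invert, hw.1, hw.2]
      have e2 : invert D W y x ↔ D x y := by simp [invert, hw.1, hw.2]
      simp only [e1, e2]
      exact add_comm _ _
    · have hw' : ¬ (y ∈ W ∧ x ∈ W) := fun h => hw ⟨h.2, h.1⟩
      have e1 : invert D W x y ↔ D x y := by simp [invert, hw]
      have e2 : invert D W y x ↔ D y x := by simp [invert, hw']
      simp only [e1, e2]
  exact_mod_cast h

lemma invert_obstruction (D : V → V → Prop) (k : ℕ) (W : Finset V) (hW : Odd W.card)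
    (hobs : IsKObstruction D k) : IsKObstruction (invert D W) k := by
  obtain ⟨r, Xs, Y, hr, hXne, hYne, hdisj, hdisjY, hcover, hund, hone, m, hmodd, hm⟩ := hobs
  have hYc : Y = (Finset.univ.biUnion Xs)ᶜ := Y_eq_compl Xs Y hdisjY hcover
  have hone' : ∀ x ∈ Finset.univ.biUnion Xs, ∀ y ∈ Y,
      (invert D W x y ∧ ¬ invert D W y x) ∨ (invert D W y x ∧ ¬ invert D W x y) := by
    intro x hx y hy
    by_cases hw : x ∈ W ∧ y ∈ W
    · have e1 : invert D W x y ↔ D y x := by simp [invert, hw.1, hw.2]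
      have e2 : invert D W y x ↔ D x y := by simp [invert, hw.1, hw.2]
      simp only [e1, e2]
      exact (hone x hx y hy).symm
    · have hw' : ¬ (y ∈ W ∧ x ∈ W) := fun h => hw ⟨h.2, h.1⟩
      have e1 : invert D W x y ↔ D x y := by simp [invert, hw]
      have e2 : invert D W y x ↔ D y x := by simp [invert, hw']
      simp only [e1, e2]
      exact hone x hx y hy
  have honeX : ∀ x ∈ Finset.univ.biUnion Xs, ∀ y ∈ (Finset.univ.biUnion Xs)ᶜ,
      (D x y ∧ ¬ D y x) ∨ (D y x ∧ ¬ D x y) := by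
    intro x hx y hy
    exact hone x hx y (by rw [hYc]; exact hy)
  have honeX' : ∀ x ∈ Finset.univ.biUnion Xs, ∀ y ∈ (Finset.univ.biUnion Xs)ᶜ,
      (invert D W x y ∧ ¬ invert D W y x) ∨ (invert D W y x ∧ ¬ invert D W x y) := by
    intro x hx y hy
    exact hone' x hx y (by rw [hYc]; exact hy)
  obtain ⟨t, hte, hts⟩ := gZ_invert D W (Finset.univ.biUnion Xs) hW honeX
  have hci := card_identity D (Finset.univ.biUnion Xs) honeX
  have hci' := card_identity (invert D W) (Finset.univ.biUnion Xs) honeX'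
  refine ⟨r, Xs, Y, hr, hXne, hYne, hdisj, hdisjY, hcover,
    fun i => by rw [undirCut_invert]; exact hund i, hone', m - t, hmodd.sub_even hte, ?_⟩
  rw [hYc] at hm ⊢
  linarith

end Aux

/-- For odd `p ≥ 3`, a `k`-obstruction cannot be made `k`-arc-strong by any finite sequence of
inversions of sets of size exactly `p`. -/
theorem stmt_3 {V : Type*} [Fintype V] [DecidableEq V] (D : V → V → Prop)
    (hirr : ∀ v, ¬ D v v) (p k : ℕ) (hp : 3 ≤ p) (hpodd : Odd p) (hk : 1 ≤ k)
    (hobs : IsKObstruction D k) :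
    ∀ l : List (Finset V), (∀ X ∈ l, X.card = p) → ¬ ArcStrong (invertSeq D l) k := by
  have main : ∀ l : List (Finset V), ∀ D : V → V → Prop, IsKObstruction D k →
      (∀ X ∈ l, X.card = p) → IsKObstruction (invertSeq D l) k := by
    intro l
    induction l with
    | nil => intro D h _; exact h
    | cons W l ih =>
      intro D h hc
      have hWodd : Odd W.card := by
        rw [hc W List.mem_cons_self]; exact hpodd
      exact ih (invert D W) (invert_obstruction D k W hWodd h)
        (fun X hX => hc X (List.mem_cons_of_mem _ hX))
  intro l hl
  exact obstruction_not_arcstrong _ k (main l D hobs hl)
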